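/- Let p, q, n, m = p+q be positive integers and let θ = Σ_{i=1}^p θ_i with θ_i = Σ_{k=p+1}^m a_{ik}(ε_i − ε_k) + Σ_{μ=1}^n b_{iμ}(ε_i − δ_μ), where a_{ik} ∈ ℤ≥0 and b_{iμ} ∈ {0,1}. Suppose a real weight Λ satisfies (Λ+ρ, ε_i − ε_k) < 0 for all i ≤ p < k ≤ m and (Λ+ρ, ε_i − δ_μ) ≤ −(i−1) for all i ≤ p, μ ≤ n. Then 2(Λ+ρ, θ) − (θ, θ) ≤ 2 Σ_{j=2}^p Σ_{μ=1}^n b_{jμ}(Σ_{i=1}^{j−1} b_{iμ} − j + 1) ≤ 0. -/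

import Mathlib

/-- ε_i in the weight space of gl(m|n), modelled as pairs of real sequences. -/
noncomputable def epsP (i : ℕ) : (ℕ → ℝ) × (ℕ → ℝ) :=
  (fun t => if t = i then 1 else 0, fun _ => 0)

/-- δ_μ in the weight space of gl(m|n). -/
noncomputable def delP (μ : ℕ) : (ℕ → ℝ) × (ℕ → ℝ) :=
  (fun _ => 0, fun t => if t = μ then 1 else 0)

/-- The symmetric bilinear form (ε_i,ε_j)=δ_{ij}, (δ_μ,δ_ν)=−δ_{μν}, (ε_i,δ_μ)=0. -/
noncomputable def BfP (m n : ℕ) (x y : (ℕ → ℝ) × (ℕ → ℝ)) : ℝ :=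
  (∑ t ∈ Finset.Icc 1 m, x.1 t * y.1 t) - ∑ t ∈ Finset.Icc 1 n, x.2 t * y.2 t

/-- θ = Σ_{i=1}^p θ_i, θ_i = Σ_{k=p+1}^m a_{ik}(ε_i−ε_k) + Σ_{μ=1}^n b_{iμ}(ε_i−δ_μ). -/
noncomputable def thetaP (p m n : ℕ) (a bb : ℕ → ℕ → ℕ) : (ℕ → ℝ) × (ℕ → ℝ) :=
  ∑ i ∈ Finset.Icc 1 p,
    ((∑ k ∈ Finset.Icc (p+1) m, ((a i k : ℝ)) • (epsP i - epsP k))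
      + ∑ μ ∈ Finset.Icc 1 n, ((bb i μ : ℝ)) • (epsP i - delP μ))


lemma theta_fst (p m n : ℕ) (a bb : ℕ → ℕ → ℕ) (t : ℕ) :
    (thetaP p m n a bb).1 t =
      (if t ∈ Finset.Icc 1 p then ((∑ k ∈ Finset.Icc (p+1) m, (a t k : ℝ)) + ∑ μ ∈ Finset.Icc 1 n, (bb t μ : ℝ)) else 0)
      - (if t ∈ Finset.Icc (p+1) m then ∑ i ∈ Finset.Icc 1 p, (a i t : ℝ) else 0) := by
  unfold thetaP
  simp only [Prod.fst_sum, Prod.fst_add, Finset.sum_apply, Pi.add_apply, Prod.fst_sub,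
    Prod.smul_fst, Pi.smul_apply, Pi.sub_apply, epsP, delP, smul_eq_mul]
  have step : ∀ i ∈ Finset.Icc 1 p,
      (∑ k ∈ Finset.Icc (p+1) m, (a i k : ℝ) * ((if t = i then 1 else 0) - if t = k then 1 else 0)
        + ∑ μ ∈ Finset.Icc 1 n, (bb i μ : ℝ) * ((if t = i then 1 else 0) - 0)) =
      ((if t = i then ((∑ k ∈ Finset.Icc (p+1) m, (a i k : ℝ)) + ∑ μ ∈ Finset.Icc 1 n, (bb i μ : ℝ)) else 0)
        - ∑ k ∈ Finset.Icc (p+1) m, (a i k : ℝ) * (if t = k then 1 else 0)) := by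
    intro i _
    by_cases h : t = i <;>
      simp [h, mul_sub, Finset.sum_sub_distrib] <;> ring
  rw [Finset.sum_congr rfl step, Finset.sum_sub_distrib]
  congr 1
  · rw [Finset.sum_ite_eq (Finset.Icc 1 p) t]
  · rw [Finset.sum_comm]
    rw [Finset.sum_congr rfl (fun k _ => by rw [← Finset.sum_mul])]
    simp only [mul_ite, mul_one, mul_zero]
    rw [Finset.sum_ite_eq (Finset.Icc (p+1) m) t]

lemma theta_snd (p m n : ℕ) (a bb : ℕ → ℕ → ℕ) (t : ℕ) :
    (thetaP p m n a bb).2 t =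
      -(if t ∈ Finset.Icc 1 n then ∑ i ∈ Finset.Icc 1 p, (bb i t : ℝ) else 0) := by
  unfold thetaP
  simp only [Prod.snd_sum, Prod.snd_add, Finset.sum_apply, Pi.add_apply, Prod.snd_sub,
    Prod.smul_snd, Pi.smul_apply, Pi.sub_apply, epsP, delP, smul_eq_mul]
  simp only [zero_sub, sub_zero, mul_zero, mul_neg, mul_ite, mul_one, Finset.sum_neg_distrib,
    Finset.sum_const, smul_zero, zero_add]
  rw [Finset.sum_comm]
  congr 1
  rw [show (∑ y ∈ Finset.Icc 1 n, ∑ x ∈ Finset.Icc 1 p, if t = y then (bb x y : ℝ) else 0)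
      = ∑ y ∈ Finset.Icc 1 n, if t = y then ∑ x ∈ Finset.Icc 1 p, (bb x y : ℝ) else 0 from
    Finset.sum_congr rfl fun y _ => by split <;> simp]
  rw [Finset.sum_ite_eq (Finset.Icc 1 n) t]

lemma Bf_eps_eps (m n : ℕ) (Lr : (ℕ → ℝ) × (ℕ → ℝ)) (i k : ℕ)
    (hi : i ∈ Finset.Icc 1 m) (hk : k ∈ Finset.Icc 1 m) :
    BfP m n Lr (epsP i - epsP k) = Lr.1 i - Lr.1 k := by
  unfold BfP epsP
  simp only [Prod.fst_sub, Prod.snd_sub, Pi.sub_apply, mul_sub, sub_zero, mul_zero,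
    Finset.sum_sub_distrib, Finset.sum_const_zero, mul_ite, mul_one]
  rw [Finset.sum_ite_eq' (Finset.Icc 1 m) i, Finset.sum_ite_eq' (Finset.Icc 1 m) k]
  simp [hi, hk]

lemma Bf_eps_del (m n : ℕ) (Lr : (ℕ → ℝ) × (ℕ → ℝ)) (i μ : ℕ)
    (hi : i ∈ Finset.Icc 1 m) (hμ : μ ∈ Finset.Icc 1 n) :
    BfP m n Lr (epsP i - delP μ) = Lr.1 i + Lr.2 μ := by
  unfold BfP epsP delP
  simp only [Prod.fst_sub, Prod.snd_sub, Pi.sub_apply, mul_sub, sub_zero, zero_sub, mul_zero,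
    mul_neg, Finset.sum_sub_distrib, Finset.sum_neg_distrib, Finset.sum_const_zero, mul_ite, mul_one]
  rw [Finset.sum_ite_eq' (Finset.Icc 1 m) i, Finset.sum_ite_eq' (Finset.Icc 1 n) μ]
  simp [hi, hμ]

lemma split_sum (p m : ℕ) (hpm : p ≤ m) (f : ℕ → ℝ) :
    ∑ t ∈ Finset.Icc 1 m, f t = (∑ t ∈ Finset.Icc 1 p, f t) + ∑ t ∈ Finset.Icc (p+1) m, f t := by
  rw [show Finset.Icc 1 m = Finset.Ioc 0 m from Finset.Icc_add_one_left_eq_Ioc 0 m,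
      show Finset.Icc 1 p = Finset.Ioc 0 p from Finset.Icc_add_one_left_eq_Ioc 0 p,
      show Finset.Icc (p+1) m = Finset.Ioc p m from Finset.Icc_add_one_left_eq_Ioc p m,
      Finset.sum_Ioc_consecutive _ (Nat.zero_le p) hpm]

lemma Bf_L_theta (p m n : ℕ) (hpm : p ≤ m) (a bb : ℕ → ℕ → ℕ) (Lr : (ℕ → ℝ) × (ℕ → ℝ)) :
    BfP m n Lr (thetaP p m n a bb) =
      ∑ i ∈ Finset.Icc 1 p, ((∑ k ∈ Finset.Icc (p+1) m, (a i k : ℝ) * (Lr.1 i - Lr.1 k))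
        + ∑ μ ∈ Finset.Icc 1 n, (bb i μ : ℝ) * (Lr.1 i + Lr.2 μ)) := by
  unfold BfP
  rw [split_sum p m hpm]
  have e1 : ∀ t ∈ Finset.Icc 1 p, Lr.1 t * (thetaP p m n a bb).1 t
      = Lr.1 t * ((∑ k ∈ Finset.Icc (p+1) m, (a t k : ℝ)) + ∑ μ ∈ Finset.Icc 1 n, (bb t μ : ℝ)) := by
    intro t ht
    rw [theta_fst]
    have h2 : t ∉ Finset.Icc (p+1) m := by simp only [Finset.mem_Icc] at ht ⊢; omega
    simp [ht, h2]
  have e2 : ∀ t ∈ Finset.Icc (p+1) m, Lr.1 t * (thetaP p m n a bb).1 t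
      = -(Lr.1 t * ∑ i ∈ Finset.Icc 1 p, (a i t : ℝ)) := by
    intro t ht
    rw [theta_fst]
    have h2 : t ∉ Finset.Icc 1 p := by simp only [Finset.mem_Icc] at ht ⊢; omega
    simp [ht, h2]
  have e3 : ∀ t ∈ Finset.Icc 1 n, Lr.2 t * (thetaP p m n a bb).2 t
      = -(Lr.2 t * ∑ i ∈ Finset.Icc 1 p, (bb i t : ℝ)) := by
    intro t ht
    rw [theta_snd]
    simp [ht]
  rw [Finset.sum_congr rfl e1, Finset.sum_congr rfl e2, Finset.sum_congr rfl e3,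
      Finset.sum_neg_distrib, Finset.sum_neg_distrib]
  simp only [mul_add, mul_sub, Finset.mul_sum, Finset.sum_add_distrib, Finset.sum_sub_distrib]
  rw [Finset.sum_comm (s := Finset.Icc (p+1) m) (t := Finset.Icc 1 p)
        (f := fun t i => Lr.1 t * (a i t : ℝ)),
      Finset.sum_comm (s := Finset.Icc 1 n) (t := Finset.Icc 1 p)
        (f := fun t i => Lr.2 t * (bb i t : ℝ))]
  simp only [mul_comm]
  ring_nf

lemma Bf_theta_theta (p m n : ℕ) (hpm : p ≤ m) (a bb : ℕ → ℕ → ℕ) :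
    BfP m n (thetaP p m n a bb) (thetaP p m n a bb) =
      (∑ t ∈ Finset.Icc 1 p,
        ((∑ k ∈ Finset.Icc (p+1) m, (a t k : ℝ)) + ∑ μ ∈ Finset.Icc 1 n, (bb t μ : ℝ))^2)
      + (∑ t ∈ Finset.Icc (p+1) m, (∑ i ∈ Finset.Icc 1 p, (a i t : ℝ))^2)
      - ∑ μ ∈ Finset.Icc 1 n, (∑ i ∈ Finset.Icc 1 p, (bb i μ : ℝ))^2 := by
  unfold BfP
  rw [split_sum p m hpm]
  have e1 : ∀ t ∈ Finset.Icc 1 p, (thetaP p m n a bb).1 t * (thetaP p m n a bb).1 t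
      = ((∑ k ∈ Finset.Icc (p+1) m, (a t k : ℝ)) + ∑ μ ∈ Finset.Icc 1 n, (bb t μ : ℝ))^2 := by
    intro t ht
    rw [theta_fst]
    have h2 : t ∉ Finset.Icc (p+1) m := by simp only [Finset.mem_Icc] at ht ⊢; omega
    simp [ht, h2]; ring
  have e2 : ∀ t ∈ Finset.Icc (p+1) m, (thetaP p m n a bb).1 t * (thetaP p m n a bb).1 t
      = (∑ i ∈ Finset.Icc 1 p, (a i t : ℝ))^2 := by
    intro t ht
    rw [theta_fst]
    have h2 : t ∉ Finset.Icc 1 p := by simp only [Finset.mem_Icc] at ht ⊢; omega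
    simp [ht, h2]; ring
  have e3 : ∀ t ∈ Finset.Icc 1 n, (thetaP p m n a bb).2 t * (thetaP p m n a bb).2 t
      = (∑ i ∈ Finset.Icc 1 p, (bb i t : ℝ))^2 := by
    intro t ht
    rw [theta_snd]
    simp [ht]; ring
  rw [Finset.sum_congr rfl e1, Finset.sum_congr rfl e2, Finset.sum_congr rfl e3]
lemma sq_sum_Icc (p : ℕ) (f : ℕ → ℝ) :
    (∑ i ∈ Finset.Icc 1 p, f i)^2 =
      ∑ j ∈ Finset.Icc 1 p, ((f j)^2 + 2 * f j * ∑ i ∈ Finset.Icc 1 (j-1), f i) := by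
  induction p with
  | zero => simp
  | succ p ih =>
    rw [Finset.sum_Icc_succ_top (by omega), Finset.sum_Icc_succ_top (by omega)]
    have h : p + 1 - 1 = p := by omega
    rw [h, add_sq, ih]
    ring

theorem theta_estimate (p q n m : ℕ) (hm : m = p + q)
    (hp : 1 ≤ p) (hq : 1 ≤ q) (hn : 1 ≤ n)
    (a bb : ℕ → ℕ → ℕ) (hbb : ∀ i μ, bb i μ ≤ 1)
    (Lr : (ℕ → ℝ) × (ℕ → ℝ))
    (h1 : ∀ i k, 1 ≤ i → i ≤ p → p + 1 ≤ k → k ≤ m →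
      BfP m n Lr (epsP i - epsP k) < 0)
    (h2 : ∀ i μ, 1 ≤ i → i ≤ p → 1 ≤ μ → μ ≤ n →
      BfP m n Lr (epsP i - delP μ) ≤ -((i : ℝ) - 1)) :
    2 * BfP m n Lr (thetaP p m n a bb) - BfP m n (thetaP p m n a bb) (thetaP p m n a bb)
      ≤ 2 * ∑ j ∈ Finset.Icc 2 p, ∑ μ ∈ Finset.Icc 1 n,
          (bb j μ : ℝ) * ((∑ i ∈ Finset.Icc 1 (j-1), (bb i μ : ℝ)) - (j : ℝ) + 1) ∧
    2 * (∑ j ∈ Finset.Icc 2 p, ∑ μ ∈ Finset.Icc 1 n,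
          (bb j μ : ℝ) * ((∑ i ∈ Finset.Icc 1 (j-1), (bb i μ : ℝ)) - (j : ℝ) + 1)) ≤ 0 := by
  have hpm : p ≤ m := by omega
  have hb01 : ∀ i μ, ((bb i μ : ℝ))^2 = (bb i μ : ℝ) := by
    intro i μ
    rcases Nat.le_one_iff_eq_zero_or_eq_one.mp (hbb i μ) with h | h <;> simp [h]
  constructor
  · -- main inequality
    have key1 : BfP m n Lr (thetaP p m n a bb)
        ≤ ∑ i ∈ Finset.Icc 1 p, ∑ μ ∈ Finset.Icc 1 n, (bb i μ : ℝ) * (-(i:ℝ) + 1) := by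
      rw [Bf_L_theta p m n hpm a bb Lr]
      apply Finset.sum_le_sum
      intro i hi
      rw [Finset.mem_Icc] at hi
      have hmemi : i ∈ Finset.Icc 1 m := by rw [Finset.mem_Icc]; omega
      have ha : (∑ k ∈ Finset.Icc (p+1) m, (a i k : ℝ) * (Lr.1 i - Lr.1 k)) ≤ 0 := by
        apply Finset.sum_nonpos
        intro k hk
        rw [Finset.mem_Icc] at hk
        have hmemk : k ∈ Finset.Icc 1 m := by rw [Finset.mem_Icc]; omega
        have := h1 i k hi.1 hi.2 hk.1 hk.2
        rw [Bf_eps_eps m n Lr i k hmemi hmemk] at this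
        exact mul_nonpos_of_nonneg_of_nonpos (Nat.cast_nonneg _) this.le
      have hbp : (∑ μ ∈ Finset.Icc 1 n, (bb i μ : ℝ) * (Lr.1 i + Lr.2 μ))
          ≤ ∑ μ ∈ Finset.Icc 1 n, (bb i μ : ℝ) * (-(i:ℝ) + 1) := by
        apply Finset.sum_le_sum
        intro μ hμ
        rw [Finset.mem_Icc] at hμ
        have hmemμ : μ ∈ Finset.Icc 1 n := by rw [Finset.mem_Icc]; omega
        have := h2 i μ hi.1 hi.2 hμ.1 hμ.2
        rw [Bf_eps_del m n Lr i μ hmemi hmemμ] at this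
        have h0 : (0:ℝ) ≤ (bb i μ : ℝ) := Nat.cast_nonneg _
        nlinarith
      linarith
    have key2 : (∑ t ∈ Finset.Icc 1 p, ∑ μ ∈ Finset.Icc 1 n, (bb t μ : ℝ))
        ≤ BfP m n (thetaP p m n a bb) (thetaP p m n a bb)
          + ∑ μ ∈ Finset.Icc 1 n, (∑ i ∈ Finset.Icc 1 p, (bb i μ : ℝ))^2 := by
      rw [Bf_theta_theta p m n hpm a bb]
      have d1 : (0:ℝ) ≤ ∑ t ∈ Finset.Icc (p+1) m, (∑ i ∈ Finset.Icc 1 p, (a i t : ℝ))^2 :=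
        Finset.sum_nonneg fun t _ => sq_nonneg _
      have d2 : (∑ t ∈ Finset.Icc 1 p, ∑ μ ∈ Finset.Icc 1 n, (bb t μ : ℝ))
          ≤ ∑ t ∈ Finset.Icc 1 p,
            ((∑ k ∈ Finset.Icc (p+1) m, (a t k : ℝ)) + ∑ μ ∈ Finset.Icc 1 n, (bb t μ : ℝ))^2 := by
        apply Finset.sum_le_sum
        intro t _
        have hc1 : (∑ k ∈ Finset.Icc (p+1) m, (a t k : ℝ))
            = ((∑ k ∈ Finset.Icc (p+1) m, a t k : ℕ) : ℝ) := by push_cast; ring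
        have hc2 : (∑ μ ∈ Finset.Icc 1 n, (bb t μ : ℝ))
            = ((∑ μ ∈ Finset.Icc 1 n, bb t μ : ℕ) : ℝ) := by push_cast; ring
        rw [hc1, hc2, ← Nat.cast_add]
        set N : ℕ := (∑ k ∈ Finset.Icc (p+1) m, a t k) + ∑ μ ∈ Finset.Icc 1 n, bb t μ with hN
        have h1' : (∑ μ ∈ Finset.Icc 1 n, bb t μ) ≤ N := by omega
        have h2' : N ≤ N^2 := by nlinarith
        calc ((∑ μ ∈ Finset.Icc 1 n, bb t μ : ℕ) : ℝ) ≤ (N : ℝ) := by exact_mod_cast h1'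
          _ ≤ (N:ℝ)^2 := by exact_mod_cast h2'
      linarith
    have key3 : (∑ μ ∈ Finset.Icc 1 n, (∑ i ∈ Finset.Icc 1 p, (bb i μ : ℝ))^2)
        - (∑ t ∈ Finset.Icc 1 p, ∑ μ ∈ Finset.Icc 1 n, (bb t μ : ℝ))
        = 2 * ∑ j ∈ Finset.Icc 1 p, ∑ μ ∈ Finset.Icc 1 n,
            (bb j μ : ℝ) * (∑ i ∈ Finset.Icc 1 (j-1), (bb i μ : ℝ)) := by
      rw [Finset.sum_congr rfl (fun μ _ => sq_sum_Icc p (fun i => (bb i μ : ℝ)))]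
      simp only [hb01, Finset.sum_add_distrib]
      rw [Finset.sum_comm (s := Finset.Icc 1 p) (t := Finset.Icc 1 n)
            (f := fun t μ => (bb t μ : ℝ)),
          Finset.sum_comm (s := Finset.Icc 1 n) (t := Finset.Icc 1 p)
            (f := fun μ j => 2 * (bb j μ : ℝ) * ∑ i ∈ Finset.Icc 1 (j-1), (bb i μ : ℝ))]
      simp only [Finset.mul_sum]
      ring_nf
    have key4 : (∑ j ∈ Finset.Icc 1 p, ∑ μ ∈ Finset.Icc 1 n, (bb j μ : ℝ) * (-(j:ℝ) + 1))
        + ∑ j ∈ Finset.Icc 1 p, ∑ μ ∈ Finset.Icc 1 n,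
            (bb j μ : ℝ) * (∑ i ∈ Finset.Icc 1 (j-1), (bb i μ : ℝ))
        = ∑ j ∈ Finset.Icc 2 p, ∑ μ ∈ Finset.Icc 1 n,
            (bb j μ : ℝ) * ((∑ i ∈ Finset.Icc 1 (j-1), (bb i μ : ℝ)) - (j : ℝ) + 1) := by
      rw [← Finset.sum_add_distrib]
      have comb : ∀ j ∈ Finset.Icc 1 p,
          ((∑ μ ∈ Finset.Icc 1 n, (bb j μ : ℝ) * (-(j:ℝ) + 1))
            + ∑ μ ∈ Finset.Icc 1 n, (bb j μ : ℝ) * (∑ i ∈ Finset.Icc 1 (j-1), (bb i μ : ℝ)))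
          = ∑ μ ∈ Finset.Icc 1 n,
              (bb j μ : ℝ) * ((∑ i ∈ Finset.Icc 1 (j-1), (bb i μ : ℝ)) - (j : ℝ) + 1) := by
        intro j _
        rw [← Finset.sum_add_distrib]
        exact Finset.sum_congr rfl fun μ _ => by ring
      rw [Finset.sum_congr rfl comb,
          Finset.Icc_eq_cons_Ioc hp, Finset.sum_cons,
          show Finset.Ioc 1 p = Finset.Icc 2 p from (Finset.Icc_add_one_left_eq_Ioc 1 p).symm]
      have hz : (∑ μ ∈ Finset.Icc 1 n,
          (bb 1 μ : ℝ) * ((∑ i ∈ Finset.Icc 1 (1-1), (bb i μ : ℝ)) - ((1:ℕ) : ℝ) + 1)) = 0 := by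
        simp
      rw [hz, zero_add]
    linarith
  · -- nonpositivity
    have : (∑ j ∈ Finset.Icc 2 p, ∑ μ ∈ Finset.Icc 1 n,
        (bb j μ : ℝ) * ((∑ i ∈ Finset.Icc 1 (j-1), (bb i μ : ℝ)) - (j : ℝ) + 1)) ≤ 0 := by
      apply Finset.sum_nonpos
      intro j hj
      rw [Finset.mem_Icc] at hj
      apply Finset.sum_nonpos
      intro μ _
      have hS : (∑ i ∈ Finset.Icc 1 (j-1), (bb i μ : ℝ)) ≤ (j : ℝ) - 1 := by
        calc (∑ i ∈ Finset.Icc 1 (j-1), (bb i μ : ℝ))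
            ≤ ∑ i ∈ Finset.Icc 1 (j-1), (1:ℝ) :=
              Finset.sum_le_sum fun i _ => by exact_mod_cast hbb i μ
          _ = ((j - 1 : ℕ) : ℝ) := by
              rw [Finset.sum_const, Nat.card_Icc]; simp
          _ = (j : ℝ) - 1 := by
              have : 1 ≤ j := by omega
              push_cast [this]; ring
      have h0 : (0:ℝ) ≤ (bb j μ : ℝ) := Nat.cast_nonneg _
      nlinarith
    linarith
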